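/- Fix σ > 0, ℓ > 0 and x, x' ∈ ℝ. For each L > max(|x|, |x'|), let κ_L(x, x') = ∑_{j=1}^∞ S(√λ_{j,L}) · φ_{j,L}(x) · φ_{j,L}(x'), where φ_{j,L}(x) = L^{-1/2} sin(π j (x+L)/(2L)), λ_{j,L} = (π j/(2L))², and S(ω) = σ² √(2πℓ²) exp(−ω² ℓ²/2). Then κ_L(x, x') converges, as L → ∞, to the exact covariance value κ(x − x') = σ² exp(−(x − x')²/(2ℓ²)). -/

import Mathlib

open Real Filter Topology Complex


lemma gauss_summable_nat {a : ℝ} (ha : 0 < a) :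
    Summable (fun n : ℕ => Real.exp (-a * (n:ℝ)^2)) := by
  have hgeom : Summable (fun n : ℕ => Real.exp (-a) ^ n) :=
    summable_geometric_of_lt_one (Real.exp_pos _).le
      (by rw [Real.exp_lt_one_iff]; linarith)
  refine Summable.of_nonneg_of_le (fun n => (Real.exp_pos _).le) (fun n => ?_) hgeom
  rw [← Real.exp_nat_mul]
  apply Real.exp_le_exp.2
  have h0 : n ≤ n^2 := Nat.le_self_pow (by norm_num) n
  have h1 : (n:ℝ) ≤ (n:ℝ)^2 := by exact_mod_cast h0
  nlinarith

lemma gauss_summable {a : ℝ} (ha : 0 < a) : Summable (fun n : ℤ => Real.exp (-a * (n:ℝ)^2)) := by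
  apply Summable.of_nat_of_neg <;> simpa using gauss_summable_nat ha



lemma re_exp_aux (r s : ℝ) : (Complex.exp ((r:ℂ) + (s:ℂ) * Complex.I)).re
    = Real.exp r * Real.cos s := by
  rw [Complex.exp_re]
  simp

lemma norm_exp_aux (r s : ℝ) : ‖Complex.exp ((r:ℂ) + (s:ℂ) * Complex.I)‖ = Real.exp r := by
  rw [Complex.norm_exp]
  simp

lemma theta_transform {a : ℝ} (ha : 0 < a) (t : ℝ) :
    ∑' j : ℤ, Real.exp (-a * (j:ℝ)^2) * Real.cos (j * t)
      = Real.sqrt (π / a) * ∑' n : ℤ, Real.exp (-(2*π*(n:ℝ) - t)^2 / (4*a)) := by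
  have hπ : (0:ℝ) < π := Real.pi_pos
  have hπ' : (π:ℂ) ≠ 0 := by exact_mod_cast hπ.ne'
  have ha' : (a:ℂ) ≠ 0 := by exact_mod_cast ha.ne'
  have hre : 0 < (((a/π : ℝ)):ℂ).re := by
    rw [Complex.ofReal_re]; positivity
  have key := Complex.tsum_exp_neg_quadratic hre (Complex.I * t / (2*π))
  -- rewrite LHS exponents
  have hexp : ∀ n : ℤ, -(π:ℂ) * ((a/π : ℝ):ℂ) * (n:ℂ)^2 + 2*(π:ℂ)*(Complex.I * t / (2*π))*(n:ℂ)
      = ((-a * (n:ℝ)^2 : ℝ):ℂ) + (((n:ℝ) * t : ℝ):ℂ) * Complex.I := by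
    intro n
    push_cast
    field_simp
  have hL : ∀ n : ℤ, (Complex.exp (-(π:ℂ) * ((a/π : ℝ):ℂ) * (n:ℂ)^2
        + 2*(π:ℂ)*(Complex.I * t / (2*π))*(n:ℂ))).re
      = Real.exp (-a * (n:ℝ)^2) * Real.cos ((n:ℝ) * t) := by
    intro n
    rw [hexp n, re_exp_aux]
  have hsum : Summable (fun n : ℤ => Complex.exp (-(π:ℂ) * ((a/π : ℝ):ℂ) * (n:ℂ)^2
      + 2*(π:ℂ)*(Complex.I * t / (2*π))*(n:ℂ))) := by
    apply Summable.of_norm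
    have : ∀ n : ℤ, ‖Complex.exp (-(π:ℂ) * ((a/π : ℝ):ℂ) * (n:ℂ)^2
        + 2*(π:ℂ)*(Complex.I * t / (2*π))*(n:ℂ))‖ = Real.exp (-a * (n:ℝ)^2) := by
      intro n
      rw [hexp n, norm_exp_aux]
    rw [funext this]
    exact gauss_summable ha
  -- rewrite RHS terms
  have hterm : ∀ n : ℤ, -(π:ℂ) / ((a/π : ℝ):ℂ) * ((n:ℂ) + Complex.I * (Complex.I * t / (2*π)))^2
      = ((-(2*π*(n:ℝ) - t)^2 / (4*a) : ℝ):ℂ) := by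
    intro n
    have h1 : (n:ℂ) + Complex.I * (Complex.I * t / (2*π))
        = (((n:ℝ) - t/(2*π) : ℝ):ℂ) := by
      push_cast
      rw [show Complex.I * (Complex.I * (t:ℂ) / (2*π)) = (Complex.I*Complex.I) * ((t:ℂ)/(2*π)) by ring,
        Complex.I_mul_I]
      ring
    rw [h1]
    have h2 : -(π:ℝ) / (a/π) * ((n:ℝ) - t/(2*π))^2 = -(2*π*(n:ℝ) - t)^2 / (4*a) := by
      field_simp
      ring
    push_cast [← h2]
    field_simp
  -- prefactor
  have hpref : (1:ℂ) / (((a/π : ℝ):ℂ)) ^ (1/2 : ℂ) = ((Real.sqrt (π/a) : ℝ):ℂ) := by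
    have h12 : (1/2 : ℂ) = (((1/2 : ℝ)):ℂ) := by norm_num
    rw [h12, ← Complex.ofReal_cpow (by positivity) (1/2 : ℝ)]
    rw [Real.sqrt_eq_rpow]
    rw [show (π/a : ℝ) = (a/π)⁻¹ by field_simp]
    rw [Real.inv_rpow (by positivity)]
    push_cast
    rw [one_div]
  -- assemble
  have hRHS : ((1:ℂ) / (((a/π : ℝ):ℂ)) ^ (1/2 : ℂ)
        * ∑' n : ℤ, Complex.exp (-(π:ℂ) / ((a/π : ℝ):ℂ) * ((n:ℂ) + Complex.I * (Complex.I * t / (2*π)))^2)).re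
      = Real.sqrt (π / a) * ∑' n : ℤ, Real.exp (-(2*π*(n:ℝ) - t)^2 / (4*a)) := by
    rw [hpref]
    have : ∀ n : ℤ, Complex.exp (-(π:ℂ) / ((a/π : ℝ):ℂ) * ((n:ℂ) + Complex.I * (Complex.I * t / (2*π)))^2)
        = ((Real.exp (-(2*π*(n:ℝ) - t)^2 / (4*a)) : ℝ):ℂ) := by
      intro n; rw [hterm n, Complex.ofReal_exp]
    rw [tsum_congr this, ← Complex.ofReal_tsum, ← Complex.ofReal_mul, Complex.ofReal_re]
  calc ∑' j : ℤ, Real.exp (-a * (j:ℝ)^2) * Real.cos (j * t)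
      = (∑' n : ℤ, Complex.exp (-(π:ℂ) * ((a/π : ℝ):ℂ) * (n:ℂ)^2
          + 2*(π:ℂ)*(Complex.I * t / (2*π))*(n:ℂ))).re := by
        rw [Complex.re_tsum hsum, tsum_congr hL]
    _ = _ := by rw [key, hRHS]


lemma sin_mul_sin (A B : ℝ) :
    Real.sin A * Real.sin B = (Real.cos (A - B) - Real.cos (A + B)) / 2 := by
  rw [Real.cos_sub, Real.cos_add]; ring

lemma cos_summable {a : ℝ} (ha : 0 < a) (t : ℝ) :
    Summable (fun j : ℤ => Real.exp (-a * (j:ℝ)^2) * Real.cos ((j:ℝ) * t)) := by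
  apply Summable.of_norm_bounded (gauss_summable ha)
  intro j
  rw [norm_mul, Real.norm_eq_abs, Real.norm_eq_abs, abs_of_pos (Real.exp_pos _)]
  calc Real.exp (-a * (j:ℝ)^2) * |Real.cos ((j:ℝ)*t)|
      ≤ Real.exp (-a * (j:ℝ)^2) * 1 := by
        exact mul_le_mul_of_nonneg_left (Real.abs_cos_le_one _) (Real.exp_pos _).le
    _ = Real.exp (-a * (j:ℝ)^2) := mul_one _

lemma covariance_identity (σ ℓ : ℝ) (hσ : 0 < σ) (hℓ : 0 < ℓ) (x x' : ℝ)
    {L : ℝ} (hL : 0 < L) :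
    (∑' j : ℕ+, (σ ^ 2 * Real.sqrt (2 * Real.pi * ℓ ^ 2) *
            Real.exp (-(Real.sqrt ((Real.pi * j / (2 * L)) ^ 2)) ^ 2 * ℓ ^ 2 / 2)) *
          ((Real.sqrt L)⁻¹ * Real.sin (Real.pi * j * (x + L) / (2 * L))) *
          ((Real.sqrt L)⁻¹ * Real.sin (Real.pi * j * (x' + L) / (2 * L))))
      = σ^2 * ((∑' n : ℤ, Real.exp (-(4*L*(n:ℝ) - (x - x'))^2 / (2*ℓ^2)))
          - (∑' n : ℤ, Real.exp (-(4*L*(n:ℝ) - (x + x') - 2*L)^2 / (2*ℓ^2)))) := by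
  have hπ : (0:ℝ) < π := Real.pi_pos
  set a : ℝ := π^2 * ℓ^2 / (8 * L^2) with ha_def
  have ha : 0 < a := by positivity
  set u : ℝ := π * (x - x') / (2*L) with hu_def
  set v : ℝ := π * (x + x' + 2*L) / (2*L) with hv_def
  set C : ℝ := σ^2 * Real.sqrt (2 * π * ℓ^2) with hC_def
  set f : ℤ → ℝ := fun j => Real.exp (-a * (j:ℝ)^2) * Real.cos ((j:ℝ) * u)
      - Real.exp (-a * (j:ℝ)^2) * Real.cos ((j:ℝ) * v) with hf_def
  -- Step A : termwise
  have stepA : ∀ w : ℝ,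
      (σ ^ 2 * Real.sqrt (2 * π * ℓ ^ 2) *
            Real.exp (-(Real.sqrt ((π * w / (2 * L)) ^ 2)) ^ 2 * ℓ ^ 2 / 2)) *
          ((Real.sqrt L)⁻¹ * Real.sin (π * w * (x + L) / (2 * L))) *
          ((Real.sqrt L)⁻¹ * Real.sin (π * w * (x' + L) / (2 * L)))
        = C / (2*L) * (Real.exp (-a * w^2) * Real.cos (w * u)
            - Real.exp (-a * w^2) * Real.cos (w * v)) := by
    intro w
    rw [Real.sq_sqrt (sq_nonneg _)]
    have he : -(π * w / (2 * L)) ^ 2 * ℓ ^ 2 / 2 = -a * w^2 := by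
      rw [ha_def]; field_simp; ring
    rw [he]
    have hprod : ∀ X sA sB : ℝ, X * ((Real.sqrt L)⁻¹ * sA) * ((Real.sqrt L)⁻¹ * sB)
        = X * L⁻¹ * (sA * sB) := by
      intro X sA sB
      rw [show X * ((Real.sqrt L)⁻¹ * sA) * ((Real.sqrt L)⁻¹ * sB)
          = X * ((Real.sqrt L)⁻¹ * (Real.sqrt L)⁻¹) * (sA * sB) by ring,
        ← mul_inv, Real.mul_self_sqrt hL.le]
    rw [hprod, sin_mul_sin]
    have harg1 : π * w * (x + L) / (2 * L) - π * w * (x' + L) / (2 * L) = w * u := by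
      rw [hu_def]; field_simp; ring
    have harg2 : π * w * (x + L) / (2 * L) + π * w * (x' + L) / (2 * L) = w * v := by
      rw [hv_def]; field_simp; ring
    rw [harg1, harg2, hC_def]
    field_simp
  -- summability of f pieces
  have hsu := cos_summable ha u
  have hsv := cos_summable ha v
  have hsf : Summable f := hsu.sub hsv
  -- Step B : ℕ+ sum to ℤ sum
  have hinj1 : Function.Injective (fun n : ℕ => (n : ℤ) + 1) := by
    intro m n h; simpa using h
  have hinj2 : Function.Injective (fun n : ℕ => -((n : ℤ) + 1)) := by
    intro m n h; simpa using h
  have hs1 : Summable (fun n : ℕ => f ((n : ℤ) + 1)) := hsf.comp_injective hinj1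
  have hs2 : Summable (fun n : ℕ => f (-((n : ℤ) + 1))) := hsf.comp_injective hinj2
  have hfeven' : ∀ m : ℤ, f (-m) = f m := by
    intro m
    rw [hf_def]
    simp only [Int.cast_neg, neg_sq, neg_mul, Real.cos_neg]
  have hfeven : ∀ n : ℕ, f (-((n : ℤ) + 1)) = f ((n : ℤ) + 1) := fun n => hfeven' _
  have hf0 : f 0 = 0 := by
    rw [hf_def]; norm_num
  have hZsum : ∑' j : ℤ, f j = 2 * ∑' n : ℕ, f ((n : ℤ) + 1) := by
    rw [tsum_of_add_one_of_neg_add_one hs1 hs2, hf0, tsum_congr hfeven]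
    ring
  -- ℕ+ ↔ ℕ
  have hpnat : (∑' j : ℕ+, (σ ^ 2 * Real.sqrt (2 * π * ℓ ^ 2) *
            Real.exp (-(Real.sqrt ((π * (j:ℝ) / (2 * L)) ^ 2)) ^ 2 * ℓ ^ 2 / 2)) *
          ((Real.sqrt L)⁻¹ * Real.sin (π * (j:ℝ) * (x + L) / (2 * L))) *
          ((Real.sqrt L)⁻¹ * Real.sin (π * (j:ℝ) * (x' + L) / (2 * L))))
      = ∑' n : ℕ, C / (2*L) * f ((n : ℤ) + 1) := by
    rw [← Equiv.pnatEquivNat.symm.tsum_eq]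
    apply tsum_congr
    intro n
    have hcast : ((Equiv.pnatEquivNat.symm n : ℕ+) : ℝ) = (n : ℝ) + 1 := by
      simp [Equiv.pnatEquivNat, Nat.succPNat]
    rw [hcast, stepA ((n:ℝ)+1), hf_def]
    push_cast
    ring_nf
  have hNsum : ∑' n : ℕ, f ((n:ℤ)+1) = (∑' j : ℤ, f j) / 2 := by
    rw [hZsum]; ring
  rw [hpnat, tsum_mul_left, hNsum]
  -- Step C : theta transform
  have hCsplit : ∑' j : ℤ, f j
      = Real.sqrt (π/a) * (∑' n : ℤ, Real.exp (-(4*L*(n:ℝ) - (x - x'))^2 / (2*ℓ^2)))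
        - Real.sqrt (π/a) * (∑' n : ℤ, Real.exp (-(4*L*(n:ℝ) - (x + x') - 2*L)^2 / (2*ℓ^2))) := by
    have e1 : ∀ n : ℤ, -(2*π*(n:ℝ) - u)^2 / (4*a) = -(4*L*(n:ℝ) - (x - x'))^2 / (2*ℓ^2) := by
      intro n; rw [hu_def, ha_def]; field_simp; ring
    have e2 : ∀ n : ℤ, -(2*π*(n:ℝ) - v)^2 / (4*a) = -(4*L*(n:ℝ) - (x + x') - 2*L)^2 / (2*ℓ^2) := by
      intro n; rw [hv_def, ha_def]; field_simp; ring
    have ht1 : ∑' j : ℤ, Real.exp (-a * (j:ℝ)^2) * Real.cos ((j:ℝ) * u)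
        = Real.sqrt (π/a) * ∑' n : ℤ, Real.exp (-(4*L*(n:ℝ) - (x - x'))^2 / (2*ℓ^2)) := by
      rw [theta_transform ha u]
      congr 1
      exact tsum_congr fun n => by rw [e1 n]
    have ht2 : ∑' j : ℤ, Real.exp (-a * (j:ℝ)^2) * Real.cos ((j:ℝ) * v)
        = Real.sqrt (π/a) * ∑' n : ℤ, Real.exp (-(4*L*(n:ℝ) - (x + x') - 2*L)^2 / (2*ℓ^2)) := by
      rw [theta_transform ha v]
      congr 1
      exact tsum_congr fun n => by rw [e2 n]
    rw [hf_def, Summable.tsum_sub hsu hsv, ht1, ht2]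
  rw [hCsplit]
  -- prefactor arithmetic
  have h8 : π / a = 8*L^2/(π*ℓ^2) := by
    rw [ha_def]; field_simp
  have hsq : Real.sqrt (2*π*ℓ^2) * Real.sqrt (8*L^2/(π*ℓ^2)) = 4*L := by
    rw [← Real.sqrt_mul (by positivity)]
    rw [show 2*π*ℓ^2 * (8*L^2/(π*ℓ^2)) = (4*L)^2 by field_simp; ring]
    exact Real.sqrt_sq (by positivity)
  have hfac : C / (2*L) * (Real.sqrt (π/a) / 2) = σ^2 := by
    rw [hC_def, h8, show σ^2 * Real.sqrt (2*π*ℓ^2) / (2*L) * (Real.sqrt (8*L^2/(π*ℓ^2)) / 2)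
      = σ^2 * (Real.sqrt (2*π*ℓ^2) * Real.sqrt (8*L^2/(π*ℓ^2))) / (4*L) by ring, hsq]
    field_simp
  set T1 := ∑' n : ℤ, Real.exp (-(4*L*(n:ℝ) - (x - x'))^2 / (2*ℓ^2))
  set T2 := ∑' n : ℤ, Real.exp (-(4*L*(n:ℝ) - (x + x') - 2*L)^2 / (2*ℓ^2))
  linear_combination (T1 - T2) * hfac


lemma T1_lim (ℓ c : ℝ) (hℓ : 0 < ℓ) :
    Tendsto (fun L : ℝ => ∑' n : ℤ, Real.exp (-(4*L*(n:ℝ) - c)^2 / (2*ℓ^2))) atTop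
      (𝓝 (Real.exp (-c^2 / (2*ℓ^2)))) := by
  set L₀ : ℝ := |c| + 1 with hL₀_def
  have hL₀ : 0 < L₀ := by positivity
  have hc : |c| ≤ L₀ := by simp [hL₀_def]
  have hgoal : Real.exp (-c^2 / (2*ℓ^2))
      = ∑' n : ℤ, (if n = (0:ℤ) then Real.exp (-c^2 / (2*ℓ^2)) else 0) := (tsum_ite_eq (0:ℤ) (fun _ => Real.exp (-c^2 / (2*ℓ^2)))).symm
  rw [hgoal]
  apply tendsto_tsum_of_dominated_convergence
    (bound := fun n : ℤ => Real.exp (-(2*L₀^2/ℓ^2) * (n:ℝ)^2))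
    (gauss_summable (by positivity))
  · -- pointwise convergence
    intro k
    by_cases hk : k = (0:ℤ)
    · subst hk
      simp only [if_true, Int.cast_zero, mul_zero, zero_sub]
      have : (fun L : ℝ => Real.exp (-(-c)^2 / (2*ℓ^2))) = fun _ => Real.exp (-c^2 / (2*ℓ^2)) := by
        funext L; ring_nf
      rw [this]
      exact tendsto_const_nhds
    · rw [if_neg hk]
      have hk1 : (1:ℝ) ≤ |(k:ℝ)| := by
        rw [← Int.cast_abs]
        exact_mod_cast Int.one_le_abs (by omega)
      have hlin : Tendsto (fun L : ℝ => 4*L - |c|) atTop atTop := by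
        apply tendsto_atTop_add_const_right
        exact tendsto_id.const_mul_atTop (by norm_num)
      have hsq : Tendsto (fun L : ℝ => (4*L - |c|)^2) atTop atTop :=
        (tendsto_pow_atTop two_ne_zero).comp hlin
      have hmain : Tendsto (fun L : ℝ => (4*L*(k:ℝ) - c)^2) atTop atTop := by
        apply tendsto_atTop_mono' atTop _ hsq
        filter_upwards [eventually_ge_atTop ((|c|+1)/4)] with L hLge
        have hL4 : 0 ≤ 4*L - |c| := by linarith [abs_nonneg c]
        have hLpos : 0 ≤ L := by linarith [abs_nonneg c]
        have h1 : |4*L*(k:ℝ)| - |c| ≤ |4*L*(k:ℝ) - c| := abs_sub_abs_le_abs_sub _ _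
        have h2 : |4*L*(k:ℝ)| = 4*L*|(k:ℝ)| := by
          rw [abs_mul, _root_.abs_of_nonneg (by linarith : (0:ℝ) ≤ 4*L)]
        have h3 : 4*L - |c| ≤ |4*L*(k:ℝ) - c| := by nlinarith
        calc (4*L - |c|)^2 ≤ |4*L*(k:ℝ) - c|^2 := by
              exact pow_le_pow_left₀ hL4 h3 2
          _ = (4*L*(k:ℝ) - c)^2 := _root_.sq_abs _
      have hdiv : Tendsto (fun L : ℝ => -(4*L*(k:ℝ) - c)^2 / (2*ℓ^2)) atTop atBot := by
        have hneg : -(1/(2*ℓ^2)) < 0 := by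
          have : (0:ℝ) < 1/(2*ℓ^2) := by positivity
          linarith
        have := hmain.atTop_mul_const_of_neg hneg
        apply this.congr
        intro L; field_simp
      have := Real.tendsto_exp_atBot.comp hdiv
      exact this.congr fun L => rfl
  · -- domination
    filter_upwards [eventually_ge_atTop L₀] with L hLge
    intro k
    rw [Real.norm_eq_abs, abs_of_pos (Real.exp_pos _)]
    apply Real.exp_le_exp.2
    by_cases hk : k = (0:ℤ)
    · subst hk
      have h0 : (0:ℝ) ≤ (0 - c)^2 / (2*ℓ^2) := by positivity
      simp only [Int.cast_zero, mul_zero]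
      rw [show (-(2*L₀^2/ℓ^2)*(0:ℝ)^2) = 0 by ring, neg_div]
      linarith
    · have hk1 : (1:ℝ) ≤ |(k:ℝ)| := by
        rw [← Int.cast_abs]
        exact_mod_cast Int.one_le_abs (by omega)
      have hLpos : 0 < L := lt_of_lt_of_le hL₀ hLge
      have h1 : |4*L*(k:ℝ)| - |c| ≤ |4*L*(k:ℝ) - c| := abs_sub_abs_le_abs_sub _ _
      have h2 : |4*L*(k:ℝ)| = 4*L*|(k:ℝ)| := by
        rw [abs_mul, _root_.abs_of_nonneg (by linarith : (0:ℝ) ≤ 4*L)]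
      have h3 : 2*L₀*|(k:ℝ)| ≤ |4*L*(k:ℝ) - c| := by nlinarith
      have h4 : 4*L₀^2*(k:ℝ)^2 ≤ (4*L*(k:ℝ) - c)^2 := by
        have := pow_le_pow_left₀ (by positivity : (0:ℝ) ≤ 2*L₀*|(k:ℝ)|) h3 2
        rw [_root_.sq_abs] at this
        nlinarith [_root_.sq_abs (k:ℝ)]
      rw [show -(2*L₀^2/ℓ^2)*(k:ℝ)^2 = -(4*L₀^2*(k:ℝ)^2) / (2*ℓ^2) by ring]
      rw [neg_div, neg_div, neg_le_neg_iff]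
      exact (div_le_div_iff_of_pos_right (by positivity)).mpr h4

lemma T2_lim (ℓ s : ℝ) (hℓ : 0 < ℓ) :
    Tendsto (fun L : ℝ => ∑' n : ℤ, Real.exp (-(4*L*(n:ℝ) - s - 2*L)^2 / (2*ℓ^2))) atTop
      (𝓝 0) := by
  set L₀ : ℝ := |s| + 1 with hL₀_def
  have hL₀ : 0 < L₀ := by positivity
  have hs : |s| ≤ L₀ := by simp [hL₀_def]
  rw [show (0:ℝ) = ∑' _ : ℤ, (0:ℝ) by rw [tsum_zero]]
  apply tendsto_tsum_of_dominated_convergence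
    (bound := fun n : ℤ => Real.exp (-(L₀^2/(2*ℓ^2)) * (n:ℝ)^2))
    (gauss_summable (by positivity))
  · intro k
    have hk1 : (1:ℝ) ≤ |2*(k:ℝ) - 1| := by
      have : (1:ℤ) ≤ |2*k - 1| := Int.one_le_abs (by omega)
      calc (1:ℝ) ≤ ((|2*k-1| : ℤ) : ℝ) := by exact_mod_cast this
        _ = |2*(k:ℝ) - 1| := by push_cast [Int.cast_abs]; norm_num
    have hlin : Tendsto (fun L : ℝ => 2*L - |s|) atTop atTop := by
      apply tendsto_atTop_add_const_right
      exact tendsto_id.const_mul_atTop (by norm_num)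
    have hsq : Tendsto (fun L : ℝ => (2*L - |s|)^2) atTop atTop :=
      (tendsto_pow_atTop two_ne_zero).comp hlin
    have hmain : Tendsto (fun L : ℝ => (4*L*(k:ℝ) - s - 2*L)^2) atTop atTop := by
      apply tendsto_atTop_mono' atTop _ hsq
      filter_upwards [eventually_ge_atTop ((|s|+1)/2)] with L hLge
      have hL2 : 0 ≤ 2*L - |s| := by linarith [abs_nonneg s]
      have hLpos : 0 ≤ L := by linarith [abs_nonneg s]
      have h1 : |2*L*(2*(k:ℝ)-1)| - |s| ≤ |2*L*(2*(k:ℝ)-1) - s| := abs_sub_abs_le_abs_sub _ _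
      have h2 : |2*L*(2*(k:ℝ)-1)| = 2*L*|2*(k:ℝ)-1| := by
        rw [abs_mul, _root_.abs_of_nonneg (by linarith : (0:ℝ) ≤ 2*L)]
      have h3 : 2*L - |s| ≤ |2*L*(2*(k:ℝ)-1) - s| := by nlinarith
      calc (2*L - |s|)^2 ≤ |2*L*(2*(k:ℝ)-1) - s|^2 := pow_le_pow_left₀ hL2 h3 2
        _ = (2*L*(2*(k:ℝ)-1) - s)^2 := _root_.sq_abs _
        _ = (4*L*(k:ℝ) - s - 2*L)^2 := by ring
    have hdiv : Tendsto (fun L : ℝ => -(4*L*(k:ℝ) - s - 2*L)^2 / (2*ℓ^2)) atTop atBot := by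
      have hneg : -(1/(2*ℓ^2)) < 0 := by
        have : (0:ℝ) < 1/(2*ℓ^2) := by positivity
        linarith
      have := hmain.atTop_mul_const_of_neg hneg
      apply this.congr
      intro L; field_simp
    exact (Real.tendsto_exp_atBot.comp hdiv).congr fun L => rfl
  · filter_upwards [eventually_ge_atTop L₀] with L hLge
    intro k
    rw [Real.norm_eq_abs, abs_of_pos (Real.exp_pos _)]
    apply Real.exp_le_exp.2
    have hk1 : (1:ℝ) ≤ |2*(k:ℝ) - 1| := by
      have : (1:ℤ) ≤ |2*k - 1| := Int.one_le_abs (by omega)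
      calc (1:ℝ) ≤ ((|2*k-1| : ℤ) : ℝ) := by exact_mod_cast this
        _ = |2*(k:ℝ) - 1| := by push_cast [Int.cast_abs]; norm_num
    have hLpos : 0 < L := lt_of_lt_of_le hL₀ hLge
    have h1 : |2*L*(2*(k:ℝ)-1)| - |s| ≤ |2*L*(2*(k:ℝ)-1) - s| := abs_sub_abs_le_abs_sub _ _
    have h2 : |2*L*(2*(k:ℝ)-1)| = 2*L*|2*(k:ℝ)-1| := by
      rw [abs_mul, _root_.abs_of_nonneg (by linarith : (0:ℝ) ≤ 2*L)]
    have h3 : L₀*|2*(k:ℝ)-1| ≤ |2*L*(2*(k:ℝ)-1) - s| := by nlinarith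
    have hsq21 : (k:ℝ)^2 ≤ (2*(k:ℝ)-1)^2 := by
      rcases le_or_gt k 0 with hk | hk
      · have : (k:ℝ) ≤ 0 := by exact_mod_cast hk
        nlinarith
      · have : (1:ℝ) ≤ (k:ℝ) := by exact_mod_cast hk
        nlinarith [sq_nonneg ((k:ℝ) - 1)]
    have h4 : L₀^2*(k:ℝ)^2 ≤ (4*L*(k:ℝ) - s - 2*L)^2 := by
      have h5 := pow_le_pow_left₀ (by positivity : (0:ℝ) ≤ L₀*|2*(k:ℝ)-1|) h3 2
      rw [_root_.sq_abs] at h5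
      have h6 : (2*L*(2*(k:ℝ)-1) - s)^2 = (4*L*(k:ℝ) - s - 2*L)^2 := by ring
      rw [h6] at h5
      nlinarith [_root_.sq_abs (2*(k:ℝ)-1), sq_nonneg L₀]
    rw [show -(L₀^2/(2*ℓ^2))*(k:ℝ)^2 = -(L₀^2*(k:ℝ)^2) / (2*ℓ^2) by ring]
    rw [neg_div, neg_div, neg_le_neg_iff]
    exact (div_le_div_iff_of_pos_right (by positivity)).mpr h4

/-- Pointwise convergence of the reduced-rank covariance approximation: with
`φ_{j,L}(x) = L^{-1/2} sin(π j (x+L)/(2L))`, `λ_{j,L} = (π j/(2L))²` and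
`S(ω) = σ²√(2πℓ²) exp(-ω²ℓ²/2)`, the series
`κ_L(x,x') = ∑_{j=1}^∞ S(√λ_{j,L}) φ_{j,L}(x) φ_{j,L}(x')` converges, as `L → ∞`, to the
exact covariance `σ² exp(-(x-x')²/(2ℓ²))`. -/
theorem reduced_rank_covariance_tendsto (σ ℓ : ℝ) (hσ : 0 < σ) (hℓ : 0 < ℓ) (x x' : ℝ) :
    Filter.Tendsto (fun L : ℝ =>
        ∑' j : ℕ+, (σ ^ 2 * Real.sqrt (2 * Real.pi * ℓ ^ 2) *
            Real.exp (-(Real.sqrt ((Real.pi * j / (2 * L)) ^ 2)) ^ 2 * ℓ ^ 2 / 2)) *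
          ((Real.sqrt L)⁻¹ * Real.sin (Real.pi * j * (x + L) / (2 * L))) *
          ((Real.sqrt L)⁻¹ * Real.sin (Real.pi * j * (x' + L) / (2 * L))))
      Filter.atTop
      (nhds (σ ^ 2 * Real.exp (-((x - x') ^ 2) / (2 * ℓ ^ 2)))) := by
  have hT1 := T1_lim ℓ (x - x') hℓ
  have hT2 := T2_lim ℓ (x + x') hℓ
  have hcomb := (hT1.sub hT2).const_mul (σ^2)
  rw [sub_zero] at hcomb
  apply hcomb.congr'
  filter_upwards [eventually_gt_atTop (0:ℝ)] with L hL
  exact (covariance_identity σ ℓ hσ hℓ x x' hL).symm
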